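/- Define B_n(t) = (1/n!) ∑_{k=0}^n (ωt)_k (ω²t)_k (t)_{n−k} (−t+k)_{n−k} / (k! (n−k)!), where ω = e^{2πi/3}. Then B_0 = 1, B_1 = 0, and for all n ≥ 0: n³ B_n − (n+1)²(2n+1) B_{n+1} + (n+2)²(n+1) B_{n+2} = t³ B_n. -/

import Mathlib

open scoped BigOperators

/-- The Pochhammer symbol (rising factorial) (a)_n. -/
noncomputable def poch (a : ℂ) (n : ℕ) : ℂ := (ascPochhammer ℂ n).eval a

/-- ω = e^{2πi/3}. -/
noncomputable def ω : ℂ := Complex.exp (2 * Real.pi * Complex.I / 3)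

/-- The polynomials B_n(t). -/
noncomputable def B (t : ℂ) (n : ℕ) : ℂ :=
  (1 / (Nat.factorial n : ℂ)) * ∑ k ∈ Finset.range (n + 1),
    poch (ω * t) k * poch (ω ^ 2 * t) k * poch t (n - k) * poch (-t + k) (n - k)
      / ((Nat.factorial k : ℂ) * (Nat.factorial (n - k) : ℂ))

lemma poch_zero (a : ℂ) : poch a 0 = 1 := by simp [poch]

lemma poch_one (a : ℂ) : poch a 1 = a := by simp [poch]

lemma poch_t1 (a : ℂ) (m : ℕ) : poch a (m+1) = poch a m * (a + m) :=
  ascPochhammer_succ_eval m a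

lemma poch_s1 (a : ℂ) (m : ℕ) : poch a (m+1) = a * poch (a+1) m := by
  unfold poch
  rw [ascPochhammer_succ_left]
  simp [Polynomial.eval_comp]

lemma poch_t2 (a : ℂ) (m : ℕ) : poch a (m+2) = poch a m * (a + m) * (a + m + 1) := by
  have e : m + 2 = (m+1) + 1 := by omega
  rw [e, poch_t1, poch_t1]
  push_cast
  ring

lemma poch_t3 (a : ℂ) (m : ℕ) :
    poch a (m+3) = poch a m * (a + m) * (a + m + 1) * (a + m + 2) := by
  have e : m + 3 = (m+2) + 1 := by omega
  rw [e, poch_t1, poch_t2]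
  push_cast
  ring

lemma poch_s2 (a : ℂ) (m : ℕ) : poch a (m+2) = a * poch (a+1) m * (a + m + 1) := by
  have e : m + 2 = (m+1) + 1 := by omega
  rw [e, poch_t1, poch_s1]
  push_cast
  ring

lemma poch_s3 (a : ℂ) (m : ℕ) :
    poch a (m+3) = a * poch (a+1) m * (a + m + 1) * (a + m + 2) := by
  have e : m + 3 = (m+2) + 1 := by omega
  rw [e, poch_t1, poch_s2]
  push_cast
  ring

lemma omega_cube : ω ^ 3 = 1 := by
  rw [ω, ← Complex.exp_nat_mul]
  rw [show (3:ℕ) * (2 * Real.pi * Complex.I / 3) = 2 * Real.pi * Complex.I by push_cast; ring]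
  exact Complex.exp_two_pi_mul_I

lemma omega_ne_one : ω ≠ 1 := by
  intro h
  rw [ω, Complex.exp_eq_one_iff] at h
  obtain ⟨n, hn⟩ := h
  have hI : (2 * Real.pi * Complex.I) ≠ 0 := by
    simp [Complex.I_ne_zero, Real.pi_ne_zero, Complex.ofReal_ne_zero]
  have h3 : (3 : ℂ) ≠ 0 := by norm_num
  have : (n : ℂ) * 3 = 1 := by
    field_simp at hn
    have h0 : ((n:ℂ) * 3 - 1) * (2 * Real.pi * Complex.I) = 0 := by linear_combination -(2 * Real.pi * Complex.I) * hn
    rcases mul_eq_zero.mp h0 with h1 | h2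
    · linear_combination h1
    · exact absurd h2 hI
  have : ((n * 3 : ℤ) : ℂ) = ((1 : ℤ) : ℂ) := by push_cast; linear_combination this
  have := Int.cast_injective (α := ℂ) this
  omega

lemma omega_quad : ω ^ 2 + ω + 1 = 0 := by
  have h : (ω - 1) * (ω ^ 2 + ω + 1) = 0 := by linear_combination omega_cube
  rcases mul_eq_zero.mp h with h1 | h2
  · exact absurd (by linear_combination h1) omega_ne_one
  · exact h2

noncomputable def pp (t : ℂ) (k : ℕ) : ℂ := poch (ω * t) k * poch (ω ^ 2 * t) k

lemma pp_zero (t : ℂ) : pp t 0 = 1 := by simp [pp, poch_zero]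

lemma pp_succ (t : ℂ) (k : ℕ) : pp t (k+1) = pp t k * ((k:ℂ)^2 - (k:ℂ)*t + t^2) := by
  unfold pp
  rw [poch_t1, poch_t1]
  have h3 := omega_cube
  have hq := omega_quad
  ring_nf
  linear_combination (poch (ω * t) k * poch (ω ^ 2 * t) k * t^2) * h3 +
    (poch (ω * t) k * poch (ω ^ 2 * t) k * (k:ℂ) * t) * hq

lemma poch_two (a : ℂ) : poch a 2 = a * (a + 1) := by
  rw [show (2:ℕ) = 1 + 1 from rfl, poch_t1, poch_one]
  push_cast; ring

lemma pp_one (t : ℂ) : pp t 1 = t ^ 2 := by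
  unfold pp
  rw [poch_one, poch_one]
  linear_combination t ^ 2 * omega_cube

lemma pp_succA (t : ℂ) (j : ℕ) :
    pp t (j+1+1) = pp t (j+1) * (((j:ℂ)+1)^2 - ((j:ℂ)+1)*t + t^2) := by
  rw [pp_succ t (j+1)]; push_cast; ring

lemma pp_succB (t : ℂ) (n : ℕ) :
    pp t (n+2) = pp t (n+1) * (((n:ℂ)+1)^2 - ((n:ℂ)+1)*t + t^2) := by
  rw [show n+2 = (n+1)+1 from rfl, pp_succ t (n+1)]; push_cast; ring

lemma fact1 (m : ℕ) : Nat.factorial (m+1) = (m+1) * Nat.factorial m := rfl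
lemma fact2 (m : ℕ) : Nat.factorial (m+2) = (m+2) * ((m+1) * Nat.factorial m) := rfl
lemma fact3 (m : ℕ) :
    Nat.factorial (m+3) = (m+3) * ((m+2) * ((m+1) * Nat.factorial m)) := rfl

lemma fact_nz (m : ℕ) : ((Nat.factorial m : ℕ) : ℂ) ≠ 0 :=
  Nat.cast_ne_zero.mpr (Nat.factorial_ne_zero m)

lemma cast_nz1 (m : ℕ) : ((m:ℂ) + 1) ≠ 0 := by
  exact_mod_cast (Nat.cast_ne_zero (R := ℂ)).mpr (by omega : m + 1 ≠ 0)
lemma cast_nz2 (m : ℕ) : ((m:ℂ) + 2) ≠ 0 := by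
  exact_mod_cast (Nat.cast_ne_zero (R := ℂ)).mpr (by omega : m + 2 ≠ 0)
lemma cast_nz3 (m : ℕ) : ((m:ℂ) + 3) ≠ 0 := by
  exact_mod_cast (Nat.cast_ne_zero (R := ℂ)).mpr (by omega : m + 3 ≠ 0)

noncomputable def TT (t : ℂ) (k j : ℕ) : ℂ :=
  pp t k * poch t j * poch (-t + k) j / ((Nat.factorial k : ℂ) * (Nat.factorial j : ℂ))

noncomputable def Sm (t : ℂ) (m : ℕ) : ℂ := ∑ k ∈ Finset.range (m + 1), TT t k (m - k)

noncomputable def Gf (t : ℂ) (n k : ℕ) : ℂ :=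
  if k = n + 1 then ((n:ℂ) - t) * (1 - t) * pp t (n+1) / (Nat.factorial n : ℂ)
  else if k = n + 2 then -pp t (n+2) / (Nat.factorial (n+1) : ℂ)
  else if 1 ≤ k ∧ k ≤ n then
    (t - (n:ℂ)) * (1 - t) * ((k:ℂ) - t - (n:ℂ)) * ((k:ℂ) - t - 1) * pp t k
      * poch t (n - k) * poch (-t + (k:ℂ)) (n - k)
      / ((Nat.factorial (k-1) : ℂ) * (Nat.factorial (n+2-k) : ℂ))
  else 0

lemma Gf_zero (t : ℂ) (n : ℕ) : Gf t n 0 = 0 := by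
  unfold Gf
  rw [if_neg (by omega), if_neg (by omega), if_neg (by omega)]

lemma Gf_big (t : ℂ) (n k : ℕ) (h : n + 2 < k) : Gf t n k = 0 := by
  unfold Gf
  rw [if_neg (by omega), if_neg (by omega), if_neg (by omega)]

lemma Gf_top1 (t : ℂ) (n : ℕ) :
    Gf t n (n+1) = ((n:ℂ) - t) * (1 - t) * pp t (n+1) / (Nat.factorial n : ℂ) := by
  unfold Gf
  rw [if_pos rfl]

lemma Gf_top2 (t : ℂ) (n : ℕ) :
    Gf t n (n+2) = -pp t (n+2) / (Nat.factorial (n+1) : ℂ) := by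
  unfold Gf
  rw [if_neg (by omega), if_pos rfl]

lemma Gf_mid (t : ℂ) (n k : ℕ) (h1 : 1 ≤ k) (h2 : k ≤ n) :
    Gf t n k = (t - (n:ℂ)) * (1 - t) * ((k:ℂ) - t - (n:ℂ)) * ((k:ℂ) - t - 1) * pp t k
      * poch t (n - k) * poch (-t + (k:ℂ)) (n - k)
      / ((Nat.factorial (k-1) : ℂ) * (Nat.factorial (n+2-k) : ℂ)) := by
  unfold Gf
  rw [if_neg (by omega), if_neg (by omega), if_pos ⟨h1, h2⟩]

-- case k = n+2
lemma case_kn2 (t : ℂ) (n : ℕ) :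
    ((n:ℂ) + 2) * TT t (n+2) 0 = Gf t n (n+2+1) - Gf t n (n+2) := by
  rw [Gf_big t n (n+2+1) (by omega), Gf_top2]
  unfold TT
  simp only [poch_zero, Nat.factorial_zero]
  rw [fact2 n, fact1 n]
  push_cast
  field_simp [fact_nz n, cast_nz1 n, cast_nz2 n]
  ring

-- case k = n+1
lemma case_kn1 (t : ℂ) (n : ℕ) :
    -(((n:ℂ) + 1) * (2*(n:ℂ) + 1) * TT t (n+1) 0) + ((n:ℂ) + 2) * TT t (n+1) 1
      = Gf t n (n+1+1) - Gf t n (n+1) := by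
  rw [show n+1+1 = n+2 from rfl, Gf_top2, Gf_top1]
  unfold TT
  simp only [poch_zero, poch_one, Nat.factorial_zero, Nat.factorial_one]
  rw [pp_succB t n, fact1 n]
  push_cast
  field_simp [fact_nz n, cast_nz1 n, cast_nz2 n]
  ring

-- case k = n with n = j+1
lemma case_kn (t : ℂ) (j : ℕ) :
    ((((j:ℂ)+1))^3 - t^3) * TT t (j+1) 0
      - (((j:ℂ)+1) + 1) * (2*((j:ℂ)+1) + 1) * TT t (j+1) 1
      + (((j:ℂ)+1) + 2) * TT t (j+1) 2
      = Gf t (j+1) (j+1+1) - Gf t (j+1) (j+1) := by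
  rw [Gf_top1 t (j+1), Gf_mid t (j+1) (j+1) (by omega) (by omega)]
  rw [show (j+1) - (j+1) = 0 from by omega, show j+1+2-(j+1) = 2 from by omega,
    show j+1-1 = j from by omega]
  unfold TT
  simp only [poch_zero, poch_one, poch_two, Nat.factorial_zero, Nat.factorial_one,
    Nat.factorial_two]
  rw [pp_succA t j, fact1 j]
  push_cast
  field_simp [fact_nz j, cast_nz1 j, cast_nz2 j, cast_nz3 j]
  ring

-- case k = 0 with n = m+1
lemma case_k0 (t : ℂ) (m : ℕ) :
    ((((m:ℂ)+1))^3 - t^3) * TT t 0 (m+1)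
      - (((m:ℂ)+1) + 1) * (2*((m:ℂ)+1) + 1) * TT t 0 (m+2)
      + (((m:ℂ)+1) + 2) * TT t 0 (m+3)
      = Gf t (m+1) (0+1) - Gf t (m+1) 0 := by
  rw [Gf_zero, show (0:ℕ)+1 = 1 from rfl, Gf_mid t (m+1) 1 (by omega) (by omega)]
  rw [show m+1-1 = m from by omega, show m+1+2-1 = m+2 from by omega,
    show (1:ℕ)-1 = 0 from rfl]
  unfold TT
  rw [poch_t1 t m, poch_t2 t m, poch_t3 t m]
  rw [poch_s1 (-t+((0:ℕ):ℂ)) m, poch_s2 (-t+((0:ℕ):ℂ)) m, poch_s3 (-t+((0:ℕ):ℂ)) m]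
  rw [show (-t + ((0:ℕ):ℂ) + 1) = -t + ((1:ℕ):ℂ) from by push_cast; ring]
  simp only [pp_zero, pp_one, Nat.factorial_zero]
  rw [fact3 m, fact2 m, fact1 m]
  push_cast
  simp only [one_mul, sub_zero, mul_div_assoc']
  rw [div_sub_div _ _ (by apply_rules [mul_ne_zero, fact_nz, cast_nz1, cast_nz2, cast_nz3, one_ne_zero]) (by apply_rules [mul_ne_zero, fact_nz, cast_nz1, cast_nz2, cast_nz3, one_ne_zero]), div_add_div _ _ (by apply_rules [mul_ne_zero, fact_nz, cast_nz1, cast_nz2, cast_nz3, one_ne_zero]) (by apply_rules [mul_ne_zero, fact_nz, cast_nz1, cast_nz2, cast_nz3, one_ne_zero]),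
    div_eq_div_iff (by apply_rules [mul_ne_zero, fact_nz, cast_nz1, cast_nz2, cast_nz3, one_ne_zero]) (by apply_rules [mul_ne_zero, fact_nz, cast_nz1, cast_nz2, cast_nz3, one_ne_zero])]
  ring

-- generic case: k = j+1, n = j+m+2
lemma case_gen (t : ℂ) (j m : ℕ) :
    ((((j:ℂ)+(m:ℂ)+2))^3 - t^3) * TT t (j+1) (m+1)
      - ((((j:ℂ)+(m:ℂ)+2)) + 1) * (2*(((j:ℂ)+(m:ℂ)+2)) + 1) * TT t (j+1) (m+2)
      + ((((j:ℂ)+(m:ℂ)+2)) + 2) * TT t (j+1) (m+3)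
      = Gf t (j+m+2) (j+1+1) - Gf t (j+m+2) (j+1) := by
  rw [show j+1+1 = j+2 from rfl]
  rw [Gf_mid t (j+m+2) (j+2) (by omega) (by omega),
    Gf_mid t (j+m+2) (j+1) (by omega) (by omega)]
  rw [show j+m+2 - (j+2) = m from by omega, show j+m+2 - (j+1) = m+1 from by omega,
    show j+m+2+2 - (j+2) = m+2 from by omega, show j+m+2+2 - (j+1) = m+3 from by omega,
    show j+2-1 = j+1 from by omega, show j+1-1 = j from by omega]
  unfold TT
  rw [pp_succB t j]
  rw [poch_t1 t m, poch_t2 t m, poch_t3 t m]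
  rw [poch_s1 (-t+((j+1:ℕ):ℂ)) m, poch_s2 (-t+((j+1:ℕ):ℂ)) m, poch_s3 (-t+((j+1:ℕ):ℂ)) m]
  rw [show (-t + ((j+1:ℕ):ℂ) + 1) = -t + ((j+2:ℕ):ℂ) from by push_cast; ring]
  rw [fact3 m, fact2 m, fact1 m, fact1 j]
  push_cast
  simp only [mul_div_assoc']
  have hD : (((j:ℂ)+1) * (Nat.factorial j : ℂ) * (((m:ℂ)+3) * (((m:ℂ)+2) * (((m:ℂ)+1) * (Nat.factorial m : ℂ)))) : ℂ) ≠ 0 := by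
    apply_rules [mul_ne_zero, fact_nz, cast_nz1, cast_nz2, cast_nz3]
  have h1 : (((j:ℂ)+1) * (Nat.factorial j : ℂ) * (((m:ℂ)+1) * (Nat.factorial m : ℂ)) : ℂ) ≠ 0 := by
    apply_rules [mul_ne_zero, fact_nz, cast_nz1, cast_nz2, cast_nz3]
  have h2 : (((j:ℂ)+1) * (Nat.factorial j : ℂ) * (((m:ℂ)+2) * (((m:ℂ)+1) * (Nat.factorial m : ℂ))) : ℂ) ≠ 0 := by
    apply_rules [mul_ne_zero, fact_nz, cast_nz1, cast_nz2, cast_nz3]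
  have h4 : ((Nat.factorial j : ℂ) * (((m:ℂ)+3) * (((m:ℂ)+2) * (((m:ℂ)+1) * (Nat.factorial m : ℂ)))) : ℂ) ≠ 0 := by
    apply_rules [mul_ne_zero, fact_nz, cast_nz1, cast_nz2, cast_nz3]
  have E1 : ∀ x : ℂ, x / (((j:ℂ)+1) * (Nat.factorial j : ℂ) * (((m:ℂ)+1) * (Nat.factorial m : ℂ)))
      = x * (((m:ℂ)+3) * ((m:ℂ)+2)) / (((j:ℂ)+1) * (Nat.factorial j : ℂ) * (((m:ℂ)+3) * (((m:ℂ)+2) * (((m:ℂ)+1) * (Nat.factorial m : ℂ))))) := by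
    intro x; rw [div_eq_div_iff h1 hD]; ring
  have E2 : ∀ x : ℂ, x / (((j:ℂ)+1) * (Nat.factorial j : ℂ) * (((m:ℂ)+2) * (((m:ℂ)+1) * (Nat.factorial m : ℂ))))
      = x * ((m:ℂ)+3) / (((j:ℂ)+1) * (Nat.factorial j : ℂ) * (((m:ℂ)+3) * (((m:ℂ)+2) * (((m:ℂ)+1) * (Nat.factorial m : ℂ))))) := by
    intro x; rw [div_eq_div_iff h2 hD]; ring
  have E4 : ∀ x : ℂ, x / ((Nat.factorial j : ℂ) * (((m:ℂ)+3) * (((m:ℂ)+2) * (((m:ℂ)+1) * (Nat.factorial m : ℂ)))))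
      = x * ((j:ℂ)+1) / (((j:ℂ)+1) * (Nat.factorial j : ℂ) * (((m:ℂ)+3) * (((m:ℂ)+2) * (((m:ℂ)+1) * (Nat.factorial m : ℂ))))) := by
    intro x; rw [div_eq_div_iff h4 hD]; ring
  simp only [E1, E2, E4]
  rw [div_sub_div_same, ← add_div, div_sub_div_same, div_eq_div_iff hD hD]
  ring
-- case n = 0, k = 0
lemma case_00 (t : ℂ) :
    ((((0:ℕ):ℂ))^3 - t^3) * TT t 0 0
      - ((((0:ℕ):ℂ)) + 1) * (2*(((0:ℕ):ℂ)) + 1) * TT t 0 1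
      + ((((0:ℕ):ℂ)) + 2) * TT t 0 2
      = Gf t 0 (0+1) - Gf t 0 0 := by
  rw [Gf_zero, Gf_top1 t 0]
  unfold TT
  simp only [poch_zero, poch_one, poch_two, pp_zero, Nat.factorial_zero,
    Nat.factorial_one, Nat.factorial_two]
  rw [show (0:ℕ)+1 = 1 from rfl, pp_one]
  push_cast
  field_simp
  ring

lemma key (t : ℂ) (n : ℕ) :
    (n:ℂ)^3 * Sm t n - ((n:ℂ)+1) * (2*(n:ℂ)+1) * Sm t (n+1) + ((n:ℂ)+2) * Sm t (n+2)
      = t^3 * Sm t n := by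
  have hterm : ∀ k ∈ Finset.range (n+3),
      ((if k ≤ n then ((n:ℂ)^3 - t^3) * TT t k (n-k) else 0)
        - (if k ≤ n+1 then ((n:ℂ)+1) * (2*(n:ℂ)+1) * TT t k (n+1-k) else 0)
        + ((n:ℂ)+2) * TT t k (n+2-k))
      = Gf t n (k+1) - Gf t n k := by
    intro k hk
    rw [Finset.mem_range] at hk
    by_cases hA : k = n+2
    · subst hA
      rw [if_neg (by omega), if_neg (by omega)]
      rw [show n+2-(n+2) = 0 from by omega]
      have := case_kn2 t n
      linear_combination this
    by_cases hB : k = n+1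
    · subst hB
      rw [if_neg (by omega), if_pos (by omega)]
      rw [show n+1-(n+1) = 0 from by omega, show n+2-(n+1) = 1 from by omega]
      have := case_kn1 t n
      linear_combination this
    -- now k ≤ n
    have hkn : k ≤ n := by omega
    rw [if_pos hkn, if_pos (by omega)]
    by_cases hC : k = n
    · subst hC
      rcases Nat.eq_zero_or_pos k with h0 | h0
      · subst h0
        rw [show 0-0 = 0 from rfl, show 0+1-0 = 1 from rfl, show 0+2-0 = 2 from rfl]
        have := case_00 t
        linear_combination this
      · obtain ⟨j, rfl⟩ : ∃ j, k = j + 1 := ⟨k - 1, by omega⟩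
        rw [show (j+1)-(j+1) = 0 from by omega, show (j+1)+1-(j+1) = 1 from by omega,
          show (j+1)+2-(j+1) = 2 from by omega]
        have := case_kn t j
        push_cast at this ⊢
        linear_combination this
    -- k < n
    have hlt : k < n := by omega
    rcases Nat.eq_zero_or_pos k with h0 | h0
    · subst h0
      obtain ⟨m, rfl⟩ : ∃ m, n = m + 1 := ⟨n - 1, by omega⟩
      rw [show (m+1)-0 = m+1 from by omega, show (m+1)+1-0 = m+2 from by omega,
        show (m+1)+2-0 = m+3 from by omega]
      have := case_k0 t m
      push_cast at this ⊢
      linear_combination this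
    · obtain ⟨j, rfl⟩ : ∃ j, k = j + 1 := ⟨k - 1, by omega⟩
      obtain ⟨m, rfl⟩ : ∃ m, n = j + m + 2 := ⟨n - j - 2, by omega⟩
      rw [show (j+m+2)-(j+1) = m+1 from by omega, show (j+m+2)+1-(j+1) = m+2 from by omega,
        show (j+m+2)+2-(j+1) = m+3 from by omega]
      have := case_gen t j m
      push_cast at this ⊢
      linear_combination this
  have hsum := Finset.sum_congr rfl hterm
  rw [Finset.sum_range_sub (fun k => Gf t n k)] at hsum
  rw [Gf_big t n (n+3) (by omega), Gf_zero, sub_zero] at hsum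
  -- split the sum
  rw [Finset.sum_add_distrib, Finset.sum_sub_distrib] at hsum
  have e1 : ∑ k ∈ Finset.range (n+3), (if k ≤ n then ((n:ℂ)^3 - t^3) * TT t k (n-k) else 0)
      = ((n:ℂ)^3 - t^3) * Sm t n := by
    rw [← Finset.sum_subset (Finset.range_subset_range.mpr (by omega : n+1 ≤ n+3))
      (fun x _ hx => by rw [if_neg (by simp at hx ⊢; omega)])]
    rw [Sm, Finset.mul_sum]
    exact Finset.sum_congr rfl fun x hx => by
      rw [Finset.mem_range] at hx; rw [if_pos (by omega)]
  have e2 : ∑ k ∈ Finset.range (n+3), (if k ≤ n+1 then ((n:ℂ)+1) * (2*(n:ℂ)+1) * TT t k (n+1-k) else 0)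
      = ((n:ℂ)+1) * (2*(n:ℂ)+1) * Sm t (n+1) := by
    rw [← Finset.sum_subset (Finset.range_subset_range.mpr (by omega : n+2 ≤ n+3))
      (fun x _ hx => by rw [if_neg (by simp at hx ⊢; omega)])]
    rw [Sm, Finset.mul_sum]
    exact Finset.sum_congr rfl fun x hx => by
      rw [Finset.mem_range] at hx; rw [if_pos (by omega)]
  have e3 : ∑ k ∈ Finset.range (n+3), ((n:ℂ)+2) * TT t k (n+2-k)
      = ((n:ℂ)+2) * Sm t (n+2) := by
    rw [Sm, Finset.mul_sum]
  rw [e1, e2, e3] at hsum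
  linear_combination hsum

lemma B_eq (t : ℂ) (m : ℕ) : B t m = (1 / (Nat.factorial m : ℂ)) * Sm t m := rfl

theorem B_recurrence (t : ℂ) :
    B t 0 = 1 ∧ B t 1 = 0 ∧
    ∀ n : ℕ, (n : ℂ) ^ 3 * B t n - ((n : ℂ) + 1) ^ 2 * (2 * n + 1) * B t (n + 1)
        + ((n : ℂ) + 2) ^ 2 * ((n : ℂ) + 1) * B t (n + 2) = t ^ 3 * B t n := by
  refine ⟨?_, ?_, ?_⟩
  · rw [B_eq]
    simp [Sm, TT, pp_zero, poch_zero]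
  · rw [B_eq, Sm]
    rw [Finset.sum_range_succ, Finset.sum_range_one]
    unfold TT
    simp only [poch_zero, poch_one, pp_zero, pp_one, Nat.factorial_zero, Nat.factorial_one,
      show (1:ℕ)-0 = 1 from rfl, show (1:ℕ)-1 = 0 from rfl]
    push_cast
    ring
  · intro n
    have hk := key t n
    have hF : ((Nat.factorial n : ℕ) : ℂ) ≠ 0 := fact_nz n
    have hb0 : Sm t n = (Nat.factorial n : ℂ) * B t n := by
      rw [B_eq]; field_simp
    have hb1 : Sm t (n+1) = ((n:ℂ)+1) * (Nat.factorial n : ℂ) * B t (n+1) := by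
      rw [B_eq, fact1 n]
      push_cast
      rw [one_div, ← mul_assoc,
        mul_inv_cancel₀ (mul_ne_zero (cast_nz1 n) (fact_nz n)), one_mul]
    have hb2 : Sm t (n+2) = ((n:ℂ)+2) * (((n:ℂ)+1) * (Nat.factorial n : ℂ)) * B t (n+2) := by
      rw [B_eq, fact2 n]
      push_cast
      rw [one_div, ← mul_assoc,
        mul_inv_cancel₀ (mul_ne_zero (cast_nz2 n) (mul_ne_zero (cast_nz1 n) (fact_nz n))), one_mul]
    rw [hb0, hb1, hb2] at hk
    have goal' : (Nat.factorial n : ℂ) * ((n:ℂ)^3 * B t n - ((n:ℂ)+1)^2 * (2*(n:ℂ)+1) * B t (n+1)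
        + ((n:ℂ)+2)^2 * ((n:ℂ)+1) * B t (n+2))
        = (Nat.factorial n : ℂ) * (t^3 * B t n) := by
      linear_combination hk
    exact mul_left_cancel₀ hF goal'
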